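/- In a geodesic metric space of nonnegative curvature (Alexandrov), let C be a closed geodesic and r a ray with r(0) ∈ C. Then r is perpendicular to C: the angle at r(0) between r and each of the two directions of C is exactly π/2. -/

import Mathlib

open Real Filter

/-- Nonnegative curvature in the Alexandrov (comparison) sense, via the midpoint
concavity inequality for distance functions. -/
def NonnegCurvature (X : Type*) [MetricSpace X] : Prop :=
  ∀ x y z m : X, dist y m = dist y z / 2 → dist z m = dist y z / 2 →
    (dist x y ^ 2 + dist x z ^ 2) / 2 - dist y z ^ 2 / 4 ≤ dist x m ^ 2

/-- A ray emanating from `q`. -/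
def IsRayFrom {X : Type*} [MetricSpace X] (r : ℝ → X) (q : X) : Prop :=
  r 0 = q ∧ ∀ s t : ℝ, 0 ≤ s → 0 ≤ t → dist (r s) (r t) = |s - t|

/-- A closed geodesic of length `ℓ`: a unit-speed `ℓ`-periodic curve `ℝ → X` which is
locally isometric. -/
def IsClosedGeodesic {X : Type*} [MetricSpace X] (γ : ℝ → X) (ℓ : ℝ) : Prop :=
  0 < ℓ ∧ (∀ t, γ (t + ℓ) = γ t) ∧
    ∀ t : ℝ, ∃ ε > (0 : ℝ), ∀ a ∈ Set.Icc (t - ε) (t + ε), ∀ b ∈ Set.Icc (t - ε) (t + ε),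
      dist (γ a) (γ b) = |a - b|

/-- The Euclidean comparison angle at `q` of the triangle `(q, x, y)`. -/
noncomputable def comparisonAngle {X : Type*} [MetricSpace X] (q x y : X) : ℝ :=
  Real.arccos ((dist q x ^ 2 + dist q y ^ 2 - dist x y ^ 2) / (2 * dist q x * dist q y))

/-- The (Alexandrov upper) angle at `q` between two curves emanating from `q`. -/
noncomputable def upperAngle {X : Type*} [MetricSpace X] (q : X) (σ r : ℝ → X) : ℝ :=
  Filter.limsup (fun st : ℝ × ℝ => comparisonAngle q (σ st.1) (r st.2))
    ((nhdsWithin (0 : ℝ) (Set.Ioi 0)) ×ˢ (nhdsWithin (0 : ℝ) (Set.Ioi 0)))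

/-- Busemann-type function of the ray `r`. -/
noncomputable def bus {X : Type*} [MetricSpace X] (r : ℝ → X) (x : X) : ℝ :=
  ⨅ s : NNReal, (dist x (r s) - (s : ℝ))

/-- In a nonnegatively curved Alexandrov space, a ray `r` starting on a closed geodesic `C`
is perpendicular to `C`: the angle at `r 0` between `r` and each of the two directions of
the closed geodesic is exactly `π/2`. -/
theorem ray_perpendicular_to_closed_geodesic {X : Type*} [MetricSpace X]
    (hcurv : NonnegCurvature X) (γ : ℝ → X) (ℓ : ℝ) (hγ : IsClosedGeodesic γ ℓ)
    (r : ℝ → X) (hr : IsRayFrom r (γ 0)) :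
    upperAngle (γ 0) r (fun t => γ t) = π / 2 ∧
      upperAngle (γ 0) r (fun t => γ (-t)) = π / 2 := by
  obtain ⟨hr0, hray⟩ := hr
  obtain ⟨hℓ, hper, hloc⟩ := hγ

  have hrd : ∀ s : ℝ, 0 ≤ s → dist (γ 0) (r s) = s := by
    intro s hs
    rw [← hr0, hray 0 s le_rfl hs, zero_sub, abs_neg, abs_of_nonneg hs]
  have hlb : ∀ (x : X) (s : ℝ), 0 ≤ s → -dist x (γ 0) ≤ dist x (r s) - s := by
    intro x s hs
    have h1 := dist_triangle (γ 0) x (r s)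
    rw [hrd s hs] at h1
    have h2 : dist (γ 0) x = dist x (γ 0) := dist_comm _ _
    linarith
  have hbdd : ∀ x : X, BddBelow (Set.range fun s : NNReal => dist x (r s) - (s : ℝ)) := by
    intro x
    exact ⟨-dist x (γ 0), by rintro _ ⟨s, rfl⟩; exact hlb x s s.2⟩
  have hBle : ∀ (x : X) (s : ℝ), 0 ≤ s → bus r x ≤ dist x (r s) - s := by
    intro x s hs
    exact ciInf_le (hbdd x) (⟨s, hs⟩ : NNReal)
  have hBapprox : ∀ (x : X) (δ : ℝ), 0 < δ → ∃ s : ℝ, 0 ≤ s ∧ dist x (r s) - s < bus r x + δ := by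
    intro x δ hδ
    have h : bus r x < bus r x + δ := by linarith
    obtain ⟨s, hs⟩ := exists_lt_of_ciInf_lt h
    exact ⟨s, s.2, hs⟩
  have hanti : ∀ (x : X) (s s' : ℝ), 0 ≤ s → s ≤ s' → dist x (r s') - s' ≤ dist x (r s) - s := by
    intro x s s' hs hss'
    have h1 := dist_triangle x (r s) (r s')
    have h2 : dist (r s) (r s') = s' - s := by
      rw [hray s s' hs (hs.trans hss'), abs_of_nonpos (by linarith)]; ring
    linarith
  have hBlip : ∀ x y : X, bus r x ≤ bus r y + dist x y := by
    intro x y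
    have h : bus r x - dist x y ≤ bus r y := by
      apply le_ciInf
      intro s
      have h1 := hBle x s s.2
      have h2 := dist_triangle x y (r s)
      linarith
    linarith
  have hB0 : bus r (γ 0) = 0 := by
    have h : (fun s : NNReal => dist (γ 0) (r s) - (s : ℝ)) = fun _ => 0 :=
      funext fun s => by rw [hrd s s.2]; ring
    rw [bus, h, ciInf_const]
  have hBmid : ∀ t : ℝ, ∃ ε > (0:ℝ), ∀ h : ℝ, |h| ≤ ε →
      bus r (γ (t + h)) + bus r (γ (t - h)) ≤ 2 * bus r (γ t) := by

    intro t
    obtain ⟨ε, hε, hiso⟩ := hloc t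
    refine ⟨ε, hε, fun h hh => ?_⟩
    obtain ⟨hh1, hh2⟩ := abs_le.mp hh
    have hmem1 : t + h ∈ Set.Icc (t - ε) (t + ε) := ⟨by linarith, by linarith⟩
    have hmem2 : t - h ∈ Set.Icc (t - ε) (t + ε) := ⟨by linarith, by linarith⟩
    have hmem0 : t ∈ Set.Icc (t - ε) (t + ε) := ⟨by linarith, by linarith⟩
    have hd1 : dist (γ (t + h)) (γ t) = |h| := by
      rw [hiso _ hmem1 _ hmem0]; congr 1; ring
    have hd2 : dist (γ (t - h)) (γ t) = |h| := by
      rw [hiso _ hmem2 _ hmem0]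
      rw [show t - h - t = -h by ring, abs_neg]
    have hd12 : dist (γ (t + h)) (γ (t - h)) = 2 * |h| := by
      rw [hiso _ hmem1 _ hmem2, show t + h - (t - h) = 2*h by ring, abs_mul]
      norm_num
    set D := dist (γ t) (γ 0) with hD
    -- key per-s inequality
    have hkey : ∀ s : ℝ, 0 < s →
        s * (bus r (γ (t + h)) + bus r (γ (t - h)))
          ≤ s * (2 * (dist (γ t) (r s) - s)) + (h ^ 2 + D ^ 2) := by
      intro s hs
      have hc := hcurv (r s) (γ (t + h)) (γ (t - h)) (γ t)
        (by rw [hd1, hd12]; ring) (by rw [hd2, hd12]; ring)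
      rw [hd12] at hc
      have hsq : (2 * |h|) ^ 2 / 4 = h ^ 2 := by
        rw [mul_pow, sq_abs]; ring
      rw [hsq] at hc
      set a := dist (r s) (γ (t + h)) with ha'
      set b := dist (r s) (γ (t - h)) with hb'
      set c0 := dist (r s) (γ t) with hc0'
      have hBa : bus r (γ (t + h)) ≤ a - s := by
        have := hBle (γ (t + h)) s hs.le
        rwa [dist_comm (γ (t+h)) (r s)] at this
      have hBb : bus r (γ (t - h)) ≤ b - s := by
        have := hBle (γ (t - h)) s hs.le
        rwa [dist_comm (γ (t-h)) (r s)] at this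
      have hqs : dist (γ 0) (r s) = s := hrd s hs.le
      have hcu : c0 ≤ s + D := by
        have h1 := dist_triangle (r s) (γ 0) (γ t)
        have h2 : dist (r s) (γ 0) = s := by rw [dist_comm, hqs]
        have h3 : dist (γ 0) (γ t) = D := dist_comm _ _
        rw [hc0']
        calc dist (r s) (γ t) ≤ dist (r s) (γ 0) + dist (γ 0) (γ t) := h1
          _ = s + D := by rw [h2, h3]
      have hcl : s - D ≤ c0 := by
        have h1 := dist_triangle (γ 0) (γ t) (r s)
        have h2 : dist (γ t) (r s) = c0 := by rw [hc0', dist_comm]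
        rw [hqs] at h1
        have h3 : dist (γ 0) (γ t) = D := dist_comm _ _
        linarith
      have hmul1 : s * (bus r (γ (t + h))) ≤ s * (a - s) :=
        mul_le_mul_of_nonneg_left hBa hs.le
      have hmul2 : s * (bus r (γ (t - h))) ≤ s * (b - s) :=
        mul_le_mul_of_nonneg_left hBb hs.le
      have hcc : dist (γ t) (r s) = c0 := by rw [hc0', dist_comm]
      rw [hcc]
      nlinarith [sq_nonneg (a - s), sq_nonneg (b - s),
        mul_nonneg (show (0:ℝ) ≤ s + D - c0 by linarith) (show (0:ℝ) ≤ c0 - (s - D) by linarith)]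
    -- take s large
    apply le_of_forall_pos_le_add
    intro δ hδ
    obtain ⟨s₁, hs₁0, hs₁⟩ := hBapprox (γ t) (δ / 4) (by linarith)
    set s := max (max s₁ 1) (2 * (h ^ 2 + D ^ 2) / δ) with hs'
    have hss₁ : s₁ ≤ s := le_trans (le_max_left _ _) (le_max_left _ _)
    have hs1 : (1:ℝ) ≤ s := le_trans (le_max_right _ _) (le_max_left _ _)
    have hspos : 0 < s := by linarith
    have hsd : 2 * (h ^ 2 + D ^ 2) / δ ≤ s := le_max_right _ _
    have hsd2 : h ^ 2 + D ^ 2 ≤ s * (δ / 2) := by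
      rw [div_le_iff₀ hδ] at hsd
      nlinarith
    have hmono : dist (γ t) (r s) - s ≤ dist (γ t) (r s₁) - s₁ := hanti (γ t) s₁ s hs₁0 hss₁
    have hlt : dist (γ t) (r s) - s < bus r (γ t) + δ / 4 := lt_of_le_of_lt hmono hs₁
    have hk := hkey s hspos
    have hfinal : s * (bus r (γ (t + h)) + bus r (γ (t - h))) ≤ s * (2 * bus r (γ t) + δ) := by
      have h1 : s * (2 * (dist (γ t) (r s) - s)) ≤ s * (2 * (bus r (γ t) + δ / 4)) :=
        mul_le_mul_of_nonneg_left (by linarith) hspos.le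
      nlinarith
    exact le_of_mul_le_mul_left (by linarith [hfinal]) hspos
  have hBzero : ∀ t, bus r (γ t) = 0 := by

    set Bγ : ℝ → ℝ := fun t => bus r (γ t) with hBγ
    have hcont : Continuous Bγ := by
      rw [continuous_iff_continuousAt]
      intro t
      rw [Metric.continuousAt_iff]
      intro ε' hε'
      obtain ⟨ε, hε, hiso⟩ := hloc t
      refine ⟨min ε ε', lt_min hε hε', fun u hu => ?_⟩
      rw [Real.dist_eq] at hu ⊢
      have hu1 : |u - t| < ε := lt_of_lt_of_le hu (min_le_left _ _)
      have hu2 : |u - t| < ε' := lt_of_lt_of_le hu (min_le_right _ _)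
      obtain ⟨ha1, ha2⟩ := abs_le.mp hu1.le
      have hd : dist (γ u) (γ t) = |u - t| :=
        hiso u ⟨by linarith, by linarith⟩ t ⟨by linarith, by linarith⟩
      have h1 := hBlip (γ u) (γ t)
      have h2 := hBlip (γ t) (γ u)
      rw [hd] at h1
      rw [dist_comm, hd] at h2
      have : |Bγ u - Bγ t| ≤ |u - t| := by
        rw [abs_sub_le_iff]
        constructor <;> · simp only [hBγ]; linarith
      exact lt_of_le_of_lt this hu2
    have hBper : Function.Periodic Bγ ℓ := fun t => by simp [hBγ, hper t]
    obtain ⟨t₀, ht₀mem, ht₀min⟩ := isCompact_Icc.exists_isMinOn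
      (Set.nonempty_Icc.mpr hℓ.le) (hcont.continuousOn (s := Set.Icc 0 ℓ))
    set m := Bγ t₀ with hm
    have hglob : ∀ t, m ≤ Bγ t := by
      intro t
      obtain ⟨y, hy, hty⟩ := hBper.exists_mem_Ico₀ hℓ t
      rw [hty]
      exact ht₀min ⟨hy.1, hy.2.le⟩
    have hS : {t | Bγ t = m} = Set.univ := by
      apply IsClopen.eq_univ
      · constructor
        · exact isClosed_eq hcont continuous_const
        · rw [Metric.isOpen_iff]
          intro t ht
          obtain ⟨ε, hε, hmid⟩ := hBmid t
          refine ⟨ε, hε, fun u hu => ?_⟩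
          rw [Metric.mem_ball, Real.dist_eq] at hu
          have := hmid (u - t) hu.le
          have he1 : t + (u - t) = u := by ring
          have he2 : t - (u - t) = 2 * t - u := by ring
          rw [he1, he2] at this
          have h1 := hglob u
          have h2 := hglob (2 * t - u)
          have htm : Bγ t = m := ht
          show Bγ u = m
          simp only [hBγ] at htm h1 h2 ⊢
          linarith
      · exact ⟨t₀, rfl⟩
    have hall : ∀ t, Bγ t = m := fun t => by
      have : t ∈ {t | Bγ t = m} := hS ▸ Set.mem_univ t
      exact this
    have hm0 : m = 0 := by rw [← hall 0]; exact hB0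
    intro t
    have := hall t
    rw [hm0] at this
    exact this
  have hge : ∀ (t s : ℝ), 0 ≤ s → s ≤ dist (γ t) (r s) := by
    intro t s hs
    have h1 := hBle (γ t) s hs
    rw [hBzero t] at h1
    linarith

  -- dyadic lower bound
  have hdy : ∀ n : ℕ, ∀ t s : ℝ, 0 ≤ s →
      s ^ 2 + (1 - (1/2 : ℝ) ^ n) * dist (γ t) (γ 0) ^ 2 ≤ dist (γ t) (r s) ^ 2 := by
    intro n
    induction n with
    | zero =>
      intro t s hs
      have h := hge t s hs
      norm_num
      nlinarith
    | succ n ih =>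
      intro t s hs
      have h2s : (0:ℝ) ≤ 2 * s := by linarith
      have hd1 : dist (r 0) (r s) = s := by
        rw [hray 0 s le_rfl hs, zero_sub, abs_neg, abs_of_nonneg hs]
      have hd2 : dist (r 0) (r (2*s)) = 2*s := by
        rw [hray 0 (2*s) le_rfl h2s, zero_sub, abs_neg, abs_of_nonneg h2s]
      have hd3 : dist (r (2*s)) (r s) = s := by
        rw [hray (2*s) s h2s hs, show 2*s - s = s by ring, abs_of_nonneg hs]
      have hc := hcurv (γ t) (r 0) (r (2*s)) (r s)
        (by rw [hd1, hd2]; ring) (by rw [hd3, hd2]; ring)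
      rw [hd2] at hc
      have ih2 := ih t (2*s) h2s
      have ih0 : dist (γ t) (r 0) = dist (γ t) (γ 0) := by rw [hr0]
      rw [ih0] at hc
      have hps : ((1:ℝ)/2) ^ (n+1) = (1/2)^n * (1/2) := pow_succ _ _
      nlinarith [ih2, hc]
  -- limit of dyadic bound
  have hdy' : ∀ t s : ℝ, 0 ≤ s →
      s ^ 2 + dist (γ t) (γ 0) ^ 2 ≤ dist (γ t) (r s) ^ 2 := by
    intro t s hs
    have hlim : Filter.Tendsto
        (fun n : ℕ => s ^ 2 + (1 - (1/2 : ℝ) ^ n) * dist (γ t) (γ 0) ^ 2) atTop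
        (nhds (s ^ 2 + (1 - 0) * dist (γ t) (γ 0) ^ 2)) := by
      exact tendsto_const_nhds.add
        ((tendsto_const_nhds.sub
          (tendsto_pow_atTop_nhds_zero_of_lt_one (by norm_num) (by norm_num))).mul
          tendsto_const_nhds)
    have hle := le_of_tendsto' hlim (fun n => hdy n t s hs)
    linarith [hle]
  -- the exact distance computation
  obtain ⟨ε₀, hε₀, hiso0⟩ := hloc 0
  have hdg : ∀ t : ℝ, |t| ≤ ε₀ → dist (γ t) (γ 0) = |t| := by
    intro t ht
    obtain ⟨h1, h2⟩ := abs_le.mp ht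
    rw [hiso0 t ⟨by linarith, by linarith⟩ 0 ⟨by linarith, by linarith⟩, sub_zero]
  have hexact : ∀ s t : ℝ, 0 ≤ s → 0 < t → t ≤ ε₀ →
      dist (r s) (γ t) ^ 2 = s ^ 2 + t ^ 2 ∧ dist (r s) (γ (-t)) ^ 2 = s ^ 2 + t ^ 2 := by
    intro s t hs ht htε
    have habs : |t| ≤ ε₀ := by rw [abs_of_nonneg ht.le]; exact htε
    have habs' : |(-t)| ≤ ε₀ := by rw [abs_neg]; exact habs
    have hD1 : dist (γ t) (γ 0) = t := by rw [hdg t habs, abs_of_nonneg ht.le]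
    have hD2 : dist (γ (-t)) (γ 0) = t := by rw [hdg (-t) habs', abs_neg, abs_of_nonneg ht.le]
    have hp := hdy' t s hs
    have hm := hdy' (-t) s hs
    rw [hD1] at hp
    rw [hD2] at hm
    have hcp : dist (r s) (γ t) = dist (γ t) (r s) := dist_comm _ _
    have hcm : dist (r s) (γ (-t)) = dist (γ (-t)) (r s) := dist_comm _ _
    -- midpoint inequality across the geodesic
    have hgd1 : dist (γ t) (γ 0) = t := hD1
    have hgd2 : dist (γ (-t)) (γ 0) = t := hD2
    have hgd12 : dist (γ t) (γ (-t)) = 2 * t := by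
      obtain ⟨h1, h2⟩ := abs_le.mp habs
      rw [hiso0 t ⟨by linarith, by linarith⟩ (-t) ⟨by linarith, by linarith⟩,
        show t - (-t) = 2*t by ring, abs_of_nonneg (by linarith)]
    have hc := hcurv (r s) (γ t) (γ (-t)) (γ 0)
      (by rw [hgd1, hgd12]; ring) (by rw [hgd2, hgd12]; ring)
    rw [hgd12] at hc
    have hq : dist (r s) (γ 0) = s := by rw [dist_comm]; exact hrd s hs
    rw [hq, hcp, hcm] at hc
    constructor
    · rw [hcp]; linarith [hp, hm, hc]
    · rw [hcm]; linarith [hp, hm, hc]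
  -- angles are exactly π/2
  have hang : ∀ s t : ℝ, 0 < s → 0 < t → t ≤ ε₀ →
      comparisonAngle (γ 0) (r s) (γ t) = π / 2 ∧
        comparisonAngle (γ 0) (r s) (γ (-t)) = π / 2 := by
    intro s t hs ht htε
    obtain ⟨he1, he2⟩ := hexact s t hs.le ht htε
    have habs : |t| ≤ ε₀ := by rw [abs_of_nonneg ht.le]; exact htε
    have hD1 : dist (γ 0) (γ t) = t := by
      rw [dist_comm, hdg t habs, abs_of_nonneg ht.le]
    have hD2 : dist (γ 0) (γ (-t)) = t := by
      rw [dist_comm, hdg (-t) (by rw [abs_neg]; exact habs), abs_neg, abs_of_nonneg ht.le]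
    have hq : dist (γ 0) (r s) = s := hrd s hs.le
    constructor
    · rw [comparisonAngle, hq, hD1, he1,
        show s^2 + t^2 - (s^2 + t^2) = 0 by ring, zero_div, Real.arccos_zero]
    · rw [comparisonAngle, hq, hD2, he2,
        show s^2 + t^2 - (s^2 + t^2) = 0 by ring, zero_div, Real.arccos_zero]
  -- conclude via limsup of eventually constant functions
  have hmem : (Set.Ioi (0:ℝ) ×ˢ Set.Ioc (0:ℝ) ε₀) ∈
      ((nhdsWithin (0 : ℝ) (Set.Ioi 0)) ×ˢ (nhdsWithin (0 : ℝ) (Set.Ioi 0))) :=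
    Filter.prod_mem_prod self_mem_nhdsWithin
      (Ioc_mem_nhdsGT_of_mem ⟨le_refl (0:ℝ), hε₀⟩)
  constructor
  · rw [upperAngle]
    rw [Filter.limsup_congr (v := fun _ => π / 2) ?_, Filter.limsup_const]
    filter_upwards [hmem] with st hst
    exact (hang st.1 st.2 hst.1 hst.2.1 hst.2.2).1
  · rw [upperAngle]
    rw [Filter.limsup_congr (v := fun _ => π / 2) ?_, Filter.limsup_const]
    filter_upwards [hmem] with st hst
    exact (hang st.1 st.2 hst.1 hst.2.1 hst.2.2).2
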